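/- Let H be a graph, let r ≥ 2, and let G be an n-vertex K_{r+1}-free graph that maximizes inj(H,·) among all n-vertex K_{r+1}-free graphs. Then for every pair of vertices u, v ∈ V(G), the number of injective homomorphisms from H to G whose image contains v is at least the number of injective homomorphisms from H to G whose image contains u, minus v(H)²·n^{v(H)−2}. -/

import Mathlib

open SimpleGraph Finset

/-- The number of injective homomorphisms from `H` to `G`. -/
noncomputable def injCount {α β : Type*} (H : SimpleGraph α) (G : SimpleGraph β) : ℕ :=
  Nat.card {f : α → β // Function.Injective f ∧ ∀ ⦃a b⦄, H.Adj a b → G.Adj (f a) (f b)}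

private lemma natCard_eq_filterCard {γ : Type*} [Fintype γ] (p : γ → Prop) [DecidablePred p] :
    Nat.card {x // p x} = (Finset.univ.filter p).card := by
  rw [Nat.card_eq_fintype_card, Fintype.card_subtype]

private lemma natcard_split {γ : Type*} [Fintype γ] (p q : γ → Prop) :
    Nat.card {x // p x} = Nat.card {x // p x ∧ q x} + Nat.card {x // p x ∧ ¬ q x} := by
  classical
  rw [natCard_eq_filterCard, natCard_eq_filterCard, natCard_eq_filterCard,
    ← Finset.filter_filter, ← Finset.filter_filter]
  exact (Finset.card_filter_add_card_filter_not (p := q)).symm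

private lemma two_in_range_bound {α : Type*} [Fintype α] [DecidableEq α] {n : ℕ}
    {u v : Fin n} (huv : u ≠ v) (p : (α → Fin n) → Prop) :
    Nat.card {f : α → Fin n // p f ∧ u ∈ Set.range f ∧ v ∈ Set.range f}
      ≤ Fintype.card α ^ 2 * n ^ (Fintype.card α - 2) := by
  classical
  rw [natCard_eq_filterCard]
  set k := Fintype.card α with hk
  have hsub : (univ.filter fun f : α → Fin n => p f ∧ u ∈ Set.range f ∧ v ∈ Set.range f) ⊆
      (univ ×ˢ univ).biUnion (fun ab : α × α =>
        univ.filter fun f : α → Fin n => f ab.1 = u ∧ f ab.2 = v) := by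
    intro f hf
    simp only [mem_filter, Set.mem_range] at hf
    obtain ⟨-, -, ⟨a, ha⟩, ⟨b, hb⟩⟩ := hf
    exact mem_biUnion.2 ⟨(a, b), by simp, by simp [ha, hb]⟩
  have hpair : ∀ ab : α × α,
      (univ.filter fun f : α → Fin n => f ab.1 = u ∧ f ab.2 = v).card ≤ n ^ (k - 2) := by
    rintro ⟨a, b⟩
    by_cases hab : a = b
    · have hempty : (univ.filter fun f : α → Fin n => f a = u ∧ f b = v) = ∅ := by
        subst hab
        refine Finset.filter_false_of_mem ?_
        rintro f - ⟨h1, h2⟩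
        exact huv (h1.symm.trans h2)
      simp [hempty]
    · rw [← Fintype.card_subtype]
      have hinj : Function.Injective fun (f : {f : α → Fin n // f a = u ∧ f b = v})
          (x : {x : α // x ≠ a ∧ x ≠ b}) => f.1 x.1 := by
        intro f g h
        apply Subtype.ext
        funext x
        by_cases hxa : x = a
        · subst hxa; rw [f.2.1, g.2.1]
        by_cases hxb : x = b
        · subst hxb; rw [f.2.2, g.2.2]
        simpa using congrFun h ⟨x, hxa, hxb⟩
      refine (Fintype.card_le_of_injective _ hinj).trans_eq ?_
      have hcard : Fintype.card {x : α // x ≠ a ∧ x ≠ b} = k - 2 := by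
        have h2 : (univ.filter fun x : α => x ≠ a ∧ x ≠ b) = ({a, b} : Finset α)ᶜ := by
          ext x; simp [not_or]
        rw [Fintype.card_subtype, h2, Finset.card_compl, Finset.card_pair hab]
      rw [Fintype.card_fun, Fintype.card_fin, hcard]
  calc (univ.filter fun f : α → Fin n => p f ∧ u ∈ Set.range f ∧ v ∈ Set.range f).card
      ≤ _ := Finset.card_le_card hsub
    _ ≤ ∑ ab ∈ univ ×ˢ univ,
          (univ.filter fun f : α → Fin n => f ab.1 = u ∧ f ab.2 = v).card :=
        Finset.card_biUnion_le
    _ ≤ (univ ×ˢ univ : Finset (α × α)).card * n ^ (k - 2) := by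
        rw [← smul_eq_mul]
        exact Finset.sum_le_card_nsmul _ _ _ (fun ab _ => hpair ab)
    _ = k ^ 2 * n ^ (k - 2) := by
        rw [Finset.card_product, Finset.card_univ, ← hk, pow_two]

/-- If `r ≥ 2` and `G` is an `n`-vertex `K_{r+1}`-free graph maximizing `inj(H,·)` among
all `n`-vertex `K_{r+1}`-free graphs, then for every pair of vertices `u, v`, the number
of injective homomorphisms whose image contains `v` is at least the number whose image
contains `u`, minus `v(H)²·n^{v(H)−2}`. -/
theorem popular_vertices_balanced {α : Type*} [Fintype α] (H : SimpleGraph α)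
    (r n : ℕ) (hr : 2 ≤ r) (G : SimpleGraph (Fin n)) (hfree : G.CliqueFree (r + 1))
    (hmax : ∀ G' : SimpleGraph (Fin n), G'.CliqueFree (r + 1) →
      injCount H G' ≤ injCount H G)
    (u v : Fin n) :
    (Nat.card {f : α → Fin n // Function.Injective f ∧
        (∀ ⦃a b⦄, H.Adj a b → G.Adj (f a) (f b)) ∧ u ∈ Set.range f} : ℝ) -
      (Fintype.card α : ℝ) ^ 2 * (n : ℝ) ^ (Fintype.card α - 2) ≤
    (Nat.card {f : α → Fin n // Function.Injective f ∧
        (∀ ⦃a b⦄, H.Adj a b → G.Adj (f a) (f b)) ∧ v ∈ Set.range f} : ℝ) := by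
  classical
  by_cases huv : u = v
  · subst huv
    exact sub_le_self _ (by positivity)
  set k := Fintype.card α with hk
  set σf : Fin n → Fin n := fun x => if x = v then u else x with hσf
  have hσv : σf v = u := if_pos rfl
  have hσ : ∀ x, x ≠ v → σf x = x := fun x hx => if_neg hx
  set G' : SimpleGraph (Fin n) :=
    { Adj := fun a b => a ≠ b ∧ G.Adj (σf a) (σf b)
      symm := ⟨fun a b h => ⟨Ne.symm h.1, h.2.symm⟩⟩
      loopless := ⟨fun a h => h.1 rfl⟩ } with hG'
  have hG'adj : ∀ a b : Fin n, G'.Adj a b ↔ a ≠ b ∧ G.Adj (σf a) (σf b) := fun _ _ => Iff.rfl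
  -- G' is K_{r+1}-free
  have hfree' : G'.CliqueFree (r + 1) := by
    intro s hs
    refine hfree (s.image σf) ⟨?_, ?_⟩
    · rintro x hx y hy hxy
      simp only [Finset.coe_image, Set.mem_image, Finset.mem_coe] at hx hy
      obtain ⟨a, ha, rfl⟩ := hx
      obtain ⟨b, hb, rfl⟩ := hy
      have hab : a ≠ b := fun h => hxy (by rw [h])
      exact ((hG'adj a b).1 (hs.1 (Finset.mem_coe.2 ha) (Finset.mem_coe.2 hb) hab)).2
    · have hinj : Set.InjOn σf ↑s := by
        intro a ha b hb hab
        by_contra hne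
        have hadj := ((hG'adj a b).1 (hs.1 ha hb hne)).2
        rw [hab] at hadj
        exact hadj.ne rfl
      rw [Finset.card_image_of_injOn hinj, hs.2]
  -- predicates
  set PG : (α → Fin n) → Prop :=
    fun f => Function.Injective f ∧ ∀ ⦃a b⦄, H.Adj a b → G.Adj (f a) (f b) with hPG
  set PG' : (α → Fin n) → Prop :=
    fun f => Function.Injective f ∧ ∀ ⦃a b⦄, H.Adj a b → G'.Adj (f a) (f b) with hPG'
  -- homomorphisms avoiding v are the same for G and G'
  have key : ∀ f : α → Fin n, v ∉ Set.range f →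
      ((∀ ⦃a b⦄, H.Adj a b → G.Adj (f a) (f b)) ↔
        ∀ ⦃a b⦄, H.Adj a b → G'.Adj (f a) (f b)) := by
    intro f hv
    have hfx : ∀ x, f x ≠ v := fun x hx => hv ⟨x, hx⟩
    constructor
    · intro h a b hab
      refine (hG'adj _ _).2 ⟨(h hab).ne, ?_⟩
      rw [hσ _ (hfx a), hσ _ (hfx b)]
      exact h hab
    · intro h a b hab
      have h2 := ((hG'adj _ _).1 (h hab)).2
      rwa [hσ _ (hfx a), hσ _ (hfx b)] at h2
  have h4 : Nat.card {f : α → Fin n // PG' f ∧ ¬ v ∈ Set.range f} =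
      Nat.card {f : α → Fin n // PG f ∧ ¬ v ∈ Set.range f} := by
    refine Nat.card_congr (Equiv.subtypeEquivRight fun f => ?_)
    rw [hPG, hPG']
    constructor
    · rintro ⟨⟨hi, hh⟩, hv⟩
      exact ⟨⟨hi, (key f hv).2 hh⟩, hv⟩
    · rintro ⟨⟨hi, hh⟩, hv⟩
      exact ⟨⟨hi, (key f hv).1 hh⟩, hv⟩
  have h1 : Nat.card {f : α → Fin n // PG' f} ≤ Nat.card {f : α → Fin n // PG f} :=
    hmax G' hfree'
  have h2 : Nat.card {f : α → Fin n // PG f} =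
      Nat.card {f : α → Fin n // PG f ∧ v ∈ Set.range f} +
      Nat.card {f : α → Fin n // PG f ∧ ¬ v ∈ Set.range f} :=
    natcard_split PG (fun f => v ∈ Set.range f)
  have h3 : Nat.card {f : α → Fin n // PG' f} =
      Nat.card {f : α → Fin n // PG' f ∧ v ∈ Set.range f} +
      Nat.card {f : α → Fin n // PG' f ∧ ¬ v ∈ Set.range f} :=
    natcard_split PG' (fun f => v ∈ Set.range f)
  have h6 : Nat.card {f : α → Fin n // PG f ∧ u ∈ Set.range f} =
      Nat.card {f : α → Fin n // (PG f ∧ u ∈ Set.range f) ∧ v ∈ Set.range f} +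
      Nat.card {f : α → Fin n // (PG f ∧ u ∈ Set.range f) ∧ ¬ v ∈ Set.range f} :=
    natcard_split (fun f => PG f ∧ u ∈ Set.range f) (fun f => v ∈ Set.range f)
  -- swap injection
  have h7 : Nat.card {f : α → Fin n // (PG f ∧ u ∈ Set.range f) ∧ ¬ v ∈ Set.range f} ≤
      Nat.card {f : α → Fin n // PG' f ∧ v ∈ Set.range f} := by
    refine Nat.card_le_card_of_injective
      (fun F => ⟨⇑(Equiv.swap u v) ∘ F.1, ?_⟩) ?_
    · obtain ⟨f, ⟨⟨hinj, hhom⟩, hu⟩, hv⟩ := F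
      have hfx : ∀ x, f x ≠ v := fun x hx => hv ⟨x, hx⟩
      have hkey : ∀ x, σf (Equiv.swap u v (f x)) = f x := by
        intro x
        by_cases hxu : f x = u
        · rw [hxu, Equiv.swap_apply_left, hσv]
        · rw [Equiv.swap_apply_of_ne_of_ne hxu (hfx x), hσ _ (hfx x)]
      have hginj : Function.Injective (⇑(Equiv.swap u v) ∘ f) :=
        (Equiv.swap u v).injective.comp hinj
      refine ⟨⟨hginj, ?_⟩, ?_⟩
      · intro a b hab
        refine (hG'adj _ _).2 ⟨fun h => hab.ne (hginj h), ?_⟩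
        simp only [Function.comp_apply]
        rw [hkey a, hkey b]
        exact hhom hab
      · obtain ⟨a, ha⟩ := hu
        exact ⟨a, by simp [Function.comp_apply, ha]⟩
    · intro F F' h
      apply Subtype.ext
      funext x
      have := congrArg Subtype.val h
      exact (Equiv.swap u v).injective (congrFun this x)
  have h8 : Nat.card {f : α → Fin n // (PG f ∧ u ∈ Set.range f) ∧ v ∈ Set.range f} ≤
      k ^ 2 * n ^ (k - 2) := by
    have heq : Nat.card {f : α → Fin n // (PG f ∧ u ∈ Set.range f) ∧ v ∈ Set.range f} =
        Nat.card {f : α → Fin n // PG f ∧ u ∈ Set.range f ∧ v ∈ Set.range f} :=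
      Nat.card_congr (Equiv.subtypeEquivRight fun f => and_assoc)
    rw [heq, hk]
    exact two_in_range_bound huv PG
  have hfinal : Nat.card {f : α → Fin n // PG f ∧ u ∈ Set.range f} ≤
      Nat.card {f : α → Fin n // PG f ∧ v ∈ Set.range f} + k ^ 2 * n ^ (k - 2) := by
    have h5 : Nat.card {f : α → Fin n // PG' f ∧ v ∈ Set.range f} ≤
        Nat.card {f : α → Fin n // PG f ∧ v ∈ Set.range f} := by omega
    omega
  have hU : Nat.card {f : α → Fin n // Function.Injective f ∧
        (∀ ⦃a b⦄, H.Adj a b → G.Adj (f a) (f b)) ∧ u ∈ Set.range f} =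
      Nat.card {f : α → Fin n // PG f ∧ u ∈ Set.range f} := by
    refine Nat.card_congr (Equiv.subtypeEquivRight fun f => ?_)
    rw [hPG]
    exact and_assoc.symm
  have hV : Nat.card {f : α → Fin n // Function.Injective f ∧
        (∀ ⦃a b⦄, H.Adj a b → G.Adj (f a) (f b)) ∧ v ∈ Set.range f} =
      Nat.card {f : α → Fin n // PG f ∧ v ∈ Set.range f} := by
    refine Nat.card_congr (Equiv.subtypeEquivRight fun f => ?_)
    rw [hPG]
    exact and_assoc.symm
  rw [hU, hV]
  have hc : ((Nat.card {f : α → Fin n // PG f ∧ u ∈ Set.range f} : ℕ) : ℝ) ≤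
      ((Nat.card {f : α → Fin n // PG f ∧ v ∈ Set.range f} : ℕ) : ℝ)
        + (k : ℝ) ^ 2 * (n : ℝ) ^ (k - 2) := by
    calc ((Nat.card {f : α → Fin n // PG f ∧ u ∈ Set.range f} : ℕ) : ℝ)
        ≤ ((Nat.card {f : α → Fin n // PG f ∧ v ∈ Set.range f} + k ^ 2 * n ^ (k - 2) : ℕ) : ℝ) :=
          Nat.cast_le.2 hfinal
      _ = _ := by push_cast; ring
  linarith
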